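/- For vectors A, B, C in R^4 with A and B nonzero, letting alpha be the angle between A and B and C^perp the component of C orthogonal to the plane spanned by A and B, the iterated triple product satisfies [A, B, [A,B,C]] = -|A|^2 |B|^2 sin^2(alpha) C^perp. -/

import Mathlib

open scoped RealInnerProductSpace

noncomputable section
set_option maxHeartbeats 1600000

abbrev E4 := EuclideanSpace ℝ (Fin 4)

/-- The triple product `[A,B,C]` in `ℝ⁴`: the vector whose `i`-th component is the
determinant of the matrix with rows `A, B, C, eᵢ`; equivalently the unique vector with
`⟪[A,B,C], X⟫ = det (A,B,C,X)` for all `X`. -/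
def trip (A B C : E4) : E4 :=
  WithLp.toLp 2 (fun i => Matrix.det (Matrix.of ![(A : Fin 4 → ℝ), (B : Fin 4 → ℝ), (C : Fin 4 → ℝ), Pi.single i 1]))

theorem det4 (M : Matrix (Fin 4) (Fin 4) ℝ) : M.det =
      M 0 0*M 1 1*M 2 2*M 3 3
      - M 0 0*M 1 1*M 2 3*M 3 2
      - M 0 0*M 1 2*M 2 1*M 3 3
      + M 0 0*M 1 2*M 2 3*M 3 1
      + M 0 0*M 1 3*M 2 1*M 3 2
      - M 0 0*M 1 3*M 2 2*M 3 1
      - M 0 1*M 1 0*M 2 2*M 3 3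
      + M 0 1*M 1 0*M 2 3*M 3 2
      + M 0 1*M 1 2*M 2 0*M 3 3
      - M 0 1*M 1 2*M 2 3*M 3 0
      - M 0 1*M 1 3*M 2 0*M 3 2
      + M 0 1*M 1 3*M 2 2*M 3 0
      + M 0 2*M 1 0*M 2 1*M 3 3
      - M 0 2*M 1 0*M 2 3*M 3 1
      - M 0 2*M 1 1*M 2 0*M 3 3
      + M 0 2*M 1 1*M 2 3*M 3 0
      + M 0 2*M 1 3*M 2 0*M 3 1
      - M 0 2*M 1 3*M 2 1*M 3 0
      - M 0 3*M 1 0*M 2 1*M 3 2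
      + M 0 3*M 1 0*M 2 2*M 3 1
      + M 0 3*M 1 1*M 2 0*M 3 2
      - M 0 3*M 1 1*M 2 2*M 3 0
      - M 0 3*M 1 2*M 2 0*M 3 1
      + M 0 3*M 1 2*M 2 1*M 3 0 := by
  set_option maxHeartbeats 1600000 in
  simp [Matrix.det_succ_row_zero, Fin.sum_univ_succ,
    show (Fin.succ 2 : Fin 4) = 3 by rfl, show (Fin.castSucc 2 : Fin 4) = 2 by rfl,
    show Fin.succAbove (2:Fin 4) 2 = 3 by rfl, show Fin.succAbove (1:Fin 4) 2 = 3 by rfl, show Fin.succAbove (3:Fin 4) 2 = 2 by rfl]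
  ring


theorem trip0 (A B C : E4) : trip A B C 0 = -A 1 * B 2 * C 3 + A 1 * B 3 * C 2 + A 2 * B 1 * C 3 - A 2 * B 3 * C 1 - A 3 * B 1 * C 2 + A 3 * B 2 * C 1 := by
  simp [trip, det4]
theorem trip1 (A B C : E4) : trip A B C 1 = A 0 * B 2 * C 3 - A 0 * B 3 * C 2 - A 2 * B 0 * C 3 + A 2 * B 3 * C 0 + A 3 * B 0 * C 2 - A 3 * B 2 * C 0 := by
  simp [trip, det4]
theorem trip2 (A B C : E4) : trip A B C 2 = -A 0 * B 1 * C 3 + A 0 * B 3 * C 1 + A 1 * B 0 * C 3 - A 1 * B 3 * C 0 - A 3 * B 0 * C 1 + A 3 * B 1 * C 0 := by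
  simp [trip, det4]
theorem trip3 (A B C : E4) : trip A B C 3 = A 0 * B 1 * C 2 - A 0 * B 2 * C 1 - A 1 * B 0 * C 2 + A 1 * B 2 * C 0 + A 2 * B 0 * C 1 - A 2 * B 1 * C 0 := by
  simp [trip, det4]

theorem trip_trip (A B D : E4) :
    trip A B (trip A B D) =
      (⟪B,B⟫ * ⟪A,D⟫ - ⟪A,B⟫ * ⟪B,D⟫) • A + (⟪A,A⟫ * ⟪B,D⟫ - ⟪A,B⟫ * ⟪A,D⟫) • B
        + (⟪A,B⟫ ^ 2 - ⟪A,A⟫ * ⟪B,B⟫) • D := by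
  ext i
  fin_cases i <;>
  · simp only [Fin.zero_eta, Fin.mk_one, Fin.reduceFinMk, trip0, trip1, trip2, trip3, PiLp.inner_apply, Fin.sum_univ_four,
      RCLike.inner_apply, conj_trivial, PiLp.add_apply, PiLp.smul_apply, smul_eq_mul]
    ring

theorem trip_add_span (A B D : E4) (a b : ℝ) :
    trip A B (a • A + b • B + D) = trip A B D := by
  ext i
  fin_cases i <;>
  · simp only [Fin.zero_eta, Fin.mk_one, Fin.reduceFinMk, trip0, trip1, trip2, trip3,
      PiLp.add_apply, PiLp.smul_apply, smul_eq_mul]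
    ring


/-- For nonzero `A, B ∈ ℝ⁴`, with `α` the angle between `A` and `B` and `C⊥` the orthogonal
projection of `C` onto the orthogonal complement of `span{A,B}`,
`[A,B,[A,B,C]] = -‖A‖² ‖B‖² sin²(α) C⊥`. -/
theorem trip_trip_eq (A B C : E4) (hA : A ≠ 0) (hB : B ≠ 0) :
    trip A B (trip A B C) =
      -((‖A‖ ^ 2 * ‖B‖ ^ 2 * Real.sin (InnerProductGeometry.angle A B) ^ 2) •
        ((Submodule.orthogonalProjectionOnto ((Submodule.span ℝ {A, B})ᗮ) C : (Submodule.span ℝ {A, B} : Submodule ℝ E4)ᗮ) : E4)) := by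
  set K : Submodule ℝ E4 := Submodule.span ℝ {A, B} with hK
  set Cp : E4 := (Submodule.orthogonalProjectionOnto Kᗮ C : E4) with hCp
  have hmem : C - Cp ∈ K := by
    have h := Submodule.sub_starProjection_mem_orthogonal (K := Kᗮ) C
    rwa [Submodule.orthogonal_orthogonal] at h
  obtain ⟨a, b, hab⟩ := Submodule.mem_span_pair.mp hmem
  have hC : C = a • A + b • B + Cp := by
    rw [hab]; abel
  have hCpK : Cp ∈ Kᗮ := (Submodule.orthogonalProjectionOnto Kᗮ C).2
  have hACp : ⟪A, Cp⟫ = 0 := by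
    exact (Submodule.mem_orthogonal K Cp).mp hCpK A
      (Submodule.subset_span (Set.mem_insert _ _))
  have hBCp : ⟪B, Cp⟫ = 0 := by
    exact (Submodule.mem_orthogonal K Cp).mp hCpK B
      (Submodule.subset_span (Set.mem_insert_of_mem _ rfl))
  have h1 : trip A B C = trip A B Cp := by
    conv_lhs => rw [hC]
    exact trip_add_span A B Cp a b
  rw [h1, trip_trip, hACp, hBCp]
  have hnA : ‖A‖ ≠ 0 := norm_ne_zero_iff.mpr hA
  have hnB : ‖B‖ ≠ 0 := norm_ne_zero_iff.mpr hB
  have hcoef : ⟪A,B⟫ ^ 2 - ⟪A,A⟫ * ⟪B,B⟫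
      = -(‖A‖ ^ 2 * ‖B‖ ^ 2 * Real.sin (InnerProductGeometry.angle A B) ^ 2) := by
    have hcos : Real.cos (InnerProductGeometry.angle A B) = ⟪A,B⟫ / (‖A‖ * ‖B‖) :=
      InnerProductGeometry.cos_angle A B
    have hsin : Real.sin (InnerProductGeometry.angle A B) ^ 2
        = 1 - (⟪A,B⟫ / (‖A‖ * ‖B‖)) ^ 2 := by
      rw [Real.sin_sq, hcos]
    rw [hsin, real_inner_self_eq_norm_sq, real_inner_self_eq_norm_sq]
    field_simp
    ring
  rw [hcoef]
  simp only [mul_zero, sub_zero, zero_mul, zero_sub, zero_smul, zero_add, neg_smul, neg_zero,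
    smul_zero, add_zero]
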